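/- For each i ∈ {1,…,5}, the matrix M_i (where M₁ = [[7,−6,6],[8,−7,7],[4,−4,3]], M₂ = [[7,6,−6],[8,7,−7],[4,3,−4]], M₃ = [[7,6,0],[8,7,0],[4,3,1]], M₄ = [[7,0,6],[8,0,7],[4,1,3]], M₅ = [[7,0,−6],[8,0,−7],[4,1,−4]]) preserves the Eisenstein quadratic form: if integers a, b, c satisfy a² = b² + c² − bc and (a', b', c')ᵗ = M_i · (a, b, c)ᵗ, then a'² = b'² + c'² − b'c'. -/
import Mathlib


open Matrix

/-- The five matrices `M₁, …, M₅`. -/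
def Mmat : Fin 5 → Matrix (Fin 3) (Fin 3) ℤ
  | 0 => !![7, -6, 6; 8, -7, 7; 4, -4, 3]
  | 1 => !![7, 6, -6; 8, 7, -7; 4, 3, -4]
  | 2 => !![7, 6, 0; 8, 7, 0; 4, 3, 1]
  | 3 => !![7, 0, 6; 8, 0, 7; 4, 1, 3]
  | 4 => !![7, 0, -6; 8, 0, -7; 4, 1, -4]

/-- each `Mᵢ` preserves the Eisenstein quadratic form: if
`a² = b² + c² − bc` and `(a', b', c')ᵗ = Mᵢ · (a, b, c)ᵗ`, then
`a'² = b'² + c'² − b'c'`. -/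
theorem Mmat_preserves_eisenstein_form (i : Fin 5) (a b c a' b' c' : ℤ)
    (h : a ^ 2 = b ^ 2 + c ^ 2 - b * c)
    (h' : (Mmat i).mulVec ![a, b, c] = ![a', b', c']) :
    a' ^ 2 = b' ^ 2 + c' ^ 2 - b' * c' := by
  have h0 := congrFun h' 0
  have h1 := congrFun h' 1
  have h2 := congrFun h' 2
  fin_cases i <;>
  · simp [Mmat, mulVec, dotProduct, Fin.sum_univ_succ] at h0 h1 h2
    subst h0 h1 h2
    linear_combination h
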